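/- arXiv:2106.02685 — 11 statements merged into one kernel-verified Lean document; each statement's English description precedes it below -/
import Mathlib

section
/- In any metric space, the optimal r-gather cost (the minimum over all partitions of P into clusters of size at least r, with arbitrary centers from the metric space, of the maximum distance from a point to its cluster center) is at least half the maximum over all points p in P of the distance from p to its r-th nearest neighbor in P. -/
/-- The distance from `p` to its `r`-th nearest neighbor in `P`
(where `p` counts as its own 1st nearest neighbor when `p ∈ P`). -/
noncomputable def rhoNN {X : Type*} [MetricSpace X] (P : Finset X) (r : ℕ) (p : X) : ℝ :=
  sInf {R : ℝ | 0 ≤ R ∧ r ≤ (P.filter fun q => dist p q ≤ R).card}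

open Classical in
/-- The optimal `r`-gather cost (over clusterings `f` assigning each point a center,
with every cluster of size at least `r`) is at least half the maximum over `p ∈ P`
of the distance from `p` to its `r`-th nearest neighbor. -/
theorem stmt0 {X : Type*} [MetricSpace X] (P : Finset X) (r : ℕ) (hr : 1 ≤ r)
    (hcard : r ≤ P.card) (hne : P.Nonempty)
    (f : X → X) (hf : ∀ p ∈ P, r ≤ (P.filter fun q => f q = f p).card) :
    P.sup' hne (fun p => rhoNN P r p) / 2 ≤ P.sup' hne fun p => dist p (f p) := by
  set S := P.sup' hne fun p => dist p (f p) with hS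
  obtain ⟨x, hx⟩ := hne
  have hS0 : (0:ℝ) ≤ S :=
    le_trans dist_nonneg (Finset.le_sup' (fun p => dist p (f p)) hx)
  rw [div_le_iff₀ (by norm_num : (0:ℝ) < 2)]
  apply Finset.sup'_le
  intro p hp
  have hmem : (2 * S) ∈ {R : ℝ | 0 ≤ R ∧ r ≤ (P.filter fun q => dist p q ≤ R).card} := by
    constructor
    · linarith
    · refine le_trans (hf p hp) (Finset.card_le_card ?_)
      intro q hq
      simp only [Finset.mem_filter] at hq ⊢
      refine ⟨hq.1, ?_⟩
      have h1 : dist p (f p) ≤ S := Finset.le_sup' (fun p => dist p (f p)) hp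
      have h2 : dist q (f q) ≤ S := Finset.le_sup' (fun p => dist p (f p)) hq.1
      calc dist p q ≤ dist p (f p) + dist (f p) q := dist_triangle _ _ _
        _ = dist p (f p) + dist q (f q) := by rw [← hq.2, dist_comm (f q) q]
        _ ≤ 2 * S := by linarith
  have hbdd : BddBelow {R : ℝ | 0 ≤ R ∧ r ≤ (P.filter fun q => dist p q ≤ R).card} :=
    ⟨0, fun R hR => hR.1⟩
  calc rhoNN P r p ≤ 2 * S := csInf_le hbdd hmem
    _ = S * 2 := by ring
end

section
/- Let G be a C-approximate (R,r)-near neighbor graph of P, and let S be a beta-ruling set of the square graph G^2. Assign every point of P to a cluster whose center is its closest point of S in graph distance in G. Then every point lies at metric distance at most 2*beta*C*R from its assigned center; and if R >= max_{p in P} rho_r(p), then every cluster has size at least r. -/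
/-- `u` and `v` are within graph distance `k` in `G`. -/
def withinDist {V : Type*} (G : SimpleGraph V) (k : ℕ) (u v : V) : Prop :=
  ∃ w : G.Walk u v, w.length ≤ k

private lemma walk_dist_le {X : Type*} [MetricSpace X] (G : SimpleGraph X) (B : ℝ)
    (hB : 0 ≤ B) (hG1 : ∀ p q, G.Adj p q → dist p q ≤ B) :
    ∀ {u v : X} (w : G.Walk u v), dist u v ≤ w.length * B := by
  intro u v w
  induction w with
  | nil => simp
  | cons h w ih =>
    calc dist _ _ ≤ dist _ _ + dist _ _ := dist_triangle _ _ _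
    _ ≤ B + w.length * B := add_le_add (hG1 _ _ h) ih
    _ = (w.length + 1) * B := by ring
    _ = _ := by push_cast [SimpleGraph.Walk.length_cons]; ring

open Classical in
/-- Lemma: given a `C`-approximate `(R,r)`-near neighbor graph `G` of `P` and a
`β`-ruling set `S` of `G²`, assigning each point to a closest (in `G`-distance)
point of `S` produces clusters of radius at most `2βCR`; and if
`R ≥ max_{p ∈ P} ρ_r(p)`, then every cluster has size at least `r`. -/
theorem stmt1 {X : Type*} [MetricSpace X] (P : Finset X) (r : ℕ) (hr : 1 ≤ r)
    (hcard : r ≤ P.card)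
    (C R : ℝ) (hC : 1 ≤ C) (hR : 0 ≤ R) (β : ℕ) (hβ : 1 ≤ β)
    (G : SimpleGraph X)
    -- `G` is a graph on the vertex set `P`
    (hGP : ∀ p q, G.Adj p q → p ∈ P ∧ q ∈ P)
    -- every edge of `G` has metric length at most `C·R`
    (hG1 : ∀ p q, G.Adj p q → dist p q ≤ C * R)
    -- every vertex either has at least `r` vertices in its closed neighborhood,
    -- or its closed neighborhood contains all points within distance `R`
    (hG2 : ∀ p ∈ P, r ≤ (P.filter fun q => G.Adj p q ∨ q = p).card ∨
      ∀ q ∈ P, dist p q ≤ R → (G.Adj p q ∨ q = p))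
    -- `S` is a `β`-ruling set of `G²`:
    (S : Finset X) (hSP : S ⊆ P)
    (hSind : ∀ s ∈ S, ∀ s' ∈ S, s ≠ s' → ¬ withinDist G 2 s s')
    (hSrul : ∀ p ∈ P, ∃ s ∈ S, withinDist G (2 * β) p s)
    -- `c` assigns every point of `P` to a closest point of `S` in `G`-distance
    (c : X → X)
    (hc : ∀ p ∈ P, c p ∈ S ∧
      ∀ s ∈ S, ∀ m : ℕ, withinDist G m p s → withinDist G m p (c p)) :
    (∀ p ∈ P, dist p (c p) ≤ 2 * β * C * R) ∧
    ((∀ p ∈ P, rhoNN P r p ≤ R) →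
      ∀ p ∈ P, r ≤ (P.filter fun q => c q = c p).card) := by
  have hCR : (0:ℝ) ≤ C * R := mul_nonneg (le_trans zero_le_one hC) hR
  -- key: a point adjacent-or-equal to a center is assigned to that center
  have key : ∀ s ∈ S, ∀ q ∈ P, (G.Adj s q ∨ q = s) → c q = s := by
    intro s hs q hq hadj
    obtain ⟨hcqS, hmin⟩ := hc q hq
    have h1 : withinDist G 1 q s := by
      rcases hadj with h | h
      · exact ⟨SimpleGraph.Walk.cons h.symm SimpleGraph.Walk.nil, by simp⟩
      · subst h; exact ⟨SimpleGraph.Walk.nil, by simp⟩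
    have h2 : withinDist G 1 q (c q) := hmin s hs 1 h1
    by_contra hne
    obtain ⟨w1, hw1⟩ := h1
    obtain ⟨w2, hw2⟩ := h2
    refine hSind s hs (c q) hcqS (fun e => hne e.symm) ?_
    refine ⟨w1.reverse.append w2, ?_⟩
    rw [SimpleGraph.Walk.length_append, SimpleGraph.Walk.length_reverse]
    omega
  constructor
  · intro p hp
    obtain ⟨s, hs, hws⟩ := hSrul p hp
    obtain ⟨w, hw⟩ := (hc p hp).2 s hs (2 * β) hws
    calc dist p (c p) ≤ w.length * (C * R) := walk_dist_le G (C*R) hCR hG1 w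
    _ ≤ (2 * β : ℕ) * (C * R) := by
        apply mul_le_mul_of_nonneg_right _ hCR
        exact_mod_cast hw
    _ = 2 * β * C * R := by push_cast; ring
  · intro hrho p hp
    have hcpS : c p ∈ S := (hc p hp).1
    set s := c p with hsdef
    have hsP : s ∈ P := hSP hcpS
    have hsub : ∀ q ∈ P, (G.Adj s q ∨ q = s) → c q = c p :=
      fun q hq h => key s hcpS q hq h
    rcases hG2 s hsP with hA | hB
    · refine le_trans hA (Finset.card_le_card ?_)
      intro q hq
      simp only [Finset.mem_filter] at hq ⊢
      exact ⟨hq.1, hsub q hq.1 hq.2⟩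
    · -- first show at least r points are within distance R of s
      have hball : r ≤ (P.filter fun q => dist s q ≤ R).card := by
        by_contra hlt
        push_neg at hlt
        have hA : (P.filter fun q => R < dist s q).Nonempty := by
          by_contra hne
          rw [Finset.not_nonempty_iff_eq_empty, Finset.filter_eq_empty_iff] at hne
          have : P.filter (fun q => dist s q ≤ R) = P := by
            apply Finset.filter_true_of_mem
            intro q hq
            have := hne hq
            linarith [not_lt.mp this]
          rw [this] at hlt
          omega
        set d : ℝ := ((P.filter fun q => R < dist s q).image (dist s)).min'
          (hA.image _) with hd
        have hdR : R < d := by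
          have hmem := Finset.min'_mem ((P.filter fun q => R < dist s q).image (dist s))
            (hA.image _)
          rw [← hd] at hmem
          obtain ⟨q, hq, hq2⟩ := Finset.mem_image.mp hmem
          rw [Finset.mem_filter] at hq
          rw [← hq2]; exact hq.2
        have hinf : rhoNN P r s ≤ R := hrho s hsP
        have hlb : ∀ R' ∈ {R : ℝ | 0 ≤ R ∧ r ≤ (P.filter fun q => dist s q ≤ R).card}, d ≤ R' := by
          intro R' hR'
          by_contra hc'
          push_neg at hc'
          have : (P.filter fun q => dist s q ≤ R') ⊆ (P.filter fun q => dist s q ≤ R) := by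
            intro q hq
            rw [Finset.mem_filter] at hq ⊢
            refine ⟨hq.1, ?_⟩
            by_contra hgt
            push_neg at hgt
            have hqA : q ∈ (P.filter fun q => R < dist s q) := by
              rw [Finset.mem_filter]; exact ⟨hq.1, hgt⟩
            have : d ≤ dist s q := Finset.min'_le _ _ (Finset.mem_image_of_mem _ hqA)
            linarith [hq.2]
          have := Finset.card_le_card this
          have := hR'.2
          omega
        have hPne : P.Nonempty := Finset.card_pos.mp (lt_of_lt_of_le hr hcard)
        set M : ℝ := (P.image (dist s)).max' (hPne.image _) with hM
        have hMmem : M ∈ {R : ℝ | 0 ≤ R ∧ r ≤ (P.filter fun q => dist s q ≤ R).card} := by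
          constructor
          · have : dist s s ≤ M := Finset.le_max' _ _ (Finset.mem_image_of_mem _ hsP)
            simpa using this
          · have : P.filter (fun q => dist s q ≤ M) = P := by
              apply Finset.filter_true_of_mem
              intro q hq
              exact Finset.le_max' _ _ (Finset.mem_image_of_mem _ hq)
            rw [this]; exact hcard
        have : d ≤ rhoNN P r s := le_csInf ⟨M, hMmem⟩ hlb
        linarith
      refine le_trans hball (Finset.card_le_card ?_)
      intro q hq
      simp only [Finset.mem_filter] at hq ⊢
      exact ⟨hq.1, hsub q hq.1 (hB q hq.1 hq.2)⟩
end

section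
/- For r-gather with at most k outliers, the optimal cost rho*^k(P) (minimum over choices of an outlier set O of size at most k of the optimal r-gather cost of P\O) is at least half of rho_hat^k(P), the (k+1)-th largest value among {rho_r(P,p) : p in P}. -/
open Classical in
/-- For `r`-gather with at most `k` outliers: for any outlier set `O` (`|O| ≤ k`)
and any valid `r`-gather clustering `f` of `P \ O`, the `(k+1)`-th largest value
of `ρ_r(P,·)` is at most twice the cost of `f`; i.e. there is an outlier set `O'`
of size at most `k` such that every remaining point `p` satisfies
`ρ_r(P,p) ≤ 2 · cost`, where the cost is the maximum point-to-center distance,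
expressed here by exhibiting a witness `q ∈ P \ O`. -/
theorem stmt2 {X : Type*} [MetricSpace X] (P : Finset X) (r k : ℕ) (hr : 1 ≤ r)
    (hk : k + r ≤ P.card)
    (O : Finset X) (hOP : O ⊆ P) (hO : O.card ≤ k)
    (f : X → X)
    (hf : ∀ p ∈ P \ O, r ≤ ((P \ O).filter fun q => f q = f p).card) :
    ∃ O' ⊆ P, O'.card ≤ k ∧
      ∀ p ∈ P \ O', ∃ q ∈ P \ O, rhoNN P r p ≤ 2 * dist q (f q) := by
  refine ⟨O, hOP, hO, fun p hp => ?_⟩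
  set C := (P \ O).filter (fun q => f q = f p) with hC
  have hcard : r ≤ C.card := hf p hp
  have hCne : C.Nonempty := Finset.card_pos.mp (lt_of_lt_of_le hr hcard)
  obtain ⟨q, hqC, hqmax⟩ := C.exists_max_image (fun q => dist q (f p)) hCne
  have hqPO : q ∈ P \ O := (Finset.mem_filter.mp hqC).1
  have hqf : f q = f p := (Finset.mem_filter.mp hqC).2
  refine ⟨q, hqPO, ?_⟩
  have hqnn : (0:ℝ) ≤ dist q (f q) := dist_nonneg
  have hpC : p ∈ C := Finset.mem_filter.mpr ⟨hp, rfl⟩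
  have hsub : C ⊆ P.filter (fun q' => dist p q' ≤ 2 * dist q (f q)) := by
    intro q' hq'
    have hq'f : f q' = f p := (Finset.mem_filter.mp hq').2
    have hq'P : q' ∈ P := (Finset.mem_sdiff.mp (Finset.mem_filter.mp hq').1).1
    refine Finset.mem_filter.mpr ⟨hq'P, ?_⟩
    have h1 : dist p (f p) ≤ dist q (f p) := hqmax p hpC
    have h2 : dist q' (f p) ≤ dist q (f p) := hqmax q' hq'
    calc dist p q' ≤ dist p (f p) + dist (f p) q' := dist_triangle _ _ _
      _ = dist p (f p) + dist q' (f p) := by rw [dist_comm (f p) q']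
      _ ≤ dist q (f p) + dist q (f p) := add_le_add h1 h2
      _ = 2 * dist q (f q) := by rw [hqf]; ring
  have hmem : (2 * dist q (f q)) ∈ {R : ℝ | 0 ≤ R ∧ r ≤ (P.filter fun q' => dist p q' ≤ R).card} := by
    refine ⟨by linarith, le_trans hcard (Finset.card_le_card hsub)⟩
  have hbdd : BddBelow {R : ℝ | 0 ≤ R ∧ r ≤ (P.filter fun q' => dist p q' ≤ R).card} :=
    ⟨0, fun x hx => hx.1⟩
  exact csInf_le hbdd hmem
end

section
/- For any finite point set P in a metric space and any r >= 1 and constant k >= 1, the sum over p in P of rho_r(p)^k is at most 2^(2k+1) * r * OPT(P), where OPT(P) is the minimum total k-th power distance cost over all partitions of P into clusters of size at least r with centers in the metric space. -/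
open Classical in
/-- Markov-type bound: there is `m ≥ 0` with `m^k` equal to the average-type
quantity, such that at least `r` points of `C` are within distance `m` of `x`. -/
lemma markov_count {X : Type*} [MetricSpace X] (C : Finset X) (x : X) (k r : ℕ)
    (hk : 1 ≤ k) (hr : 1 ≤ r) (hn : r ≤ C.card) :
    ∃ m : ℝ, 0 ≤ m ∧
      m ^ k = (∑ q ∈ C, dist q x ^ k) / ((C.card : ℝ) - r + 1) ∧
      r ≤ (C.filter fun q => dist q x ≤ m).card := by
  set S : ℝ := ∑ q ∈ C, dist q x ^ k with hS
  have hS0 : 0 ≤ S := Finset.sum_nonneg fun q _ => pow_nonneg dist_nonneg k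
  have hd0 : (0:ℝ) < (C.card : ℝ) - r + 1 := by
    have : (r:ℝ) ≤ C.card := by exact_mod_cast hn
    linarith
  set t : ℝ := S / ((C.card : ℝ) - r + 1) with htdef
  have ht0 : 0 ≤ t := div_nonneg hS0 hd0.le
  have hkne : (k:ℝ) ≠ 0 := by exact_mod_cast (by omega : k ≠ 0)
  set m : ℝ := t ^ ((k:ℝ)⁻¹) with hm
  have hm0 : 0 ≤ m := Real.rpow_nonneg ht0 _
  have hmk : m ^ k = t := by
    rw [hm, ← Real.rpow_natCast (t ^ ((k:ℝ)⁻¹)) k, ← Real.rpow_mul ht0,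
      inv_mul_cancel₀ hkne, Real.rpow_one]
  refine ⟨m, hm0, hmk, ?_⟩
  by_contra hcon
  push_neg at hcon
  set B := C.filter fun q => ¬ dist q x ≤ m with hB
  have hsplit : (C.filter fun q => dist q x ≤ m).card + B.card = C.card :=
    Finset.card_filter_add_card_filter_not _
  have hBcard : C.card + 1 ≤ r + B.card := by omega
  have hBR : ((C.card : ℝ) - r + 1) ≤ B.card := by
    have : ((C.card:ℝ) + 1 ≤ (r:ℝ) + B.card) := by exact_mod_cast hBcard
    linarith
  have hBne : B.Nonempty := by
    rw [← Finset.card_pos]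
    have : (0:ℝ) < (B.card : ℝ) := lt_of_lt_of_le hd0 hBR
    exact_mod_cast this
  have hlt : ∑ q ∈ B, (m ^ k) < ∑ q ∈ B, dist q x ^ k := by
    apply Finset.sum_lt_sum_of_nonempty hBne
    intro q hq
    have hq' : m < dist q x := not_le.mp (Finset.mem_filter.mp hq).2
    exact pow_lt_pow_left₀ hq' hm0 (by omega)
  have hle : ∑ q ∈ B, dist q x ^ k ≤ S :=
    Finset.sum_le_sum_of_subset_of_nonneg (Finset.filter_subset _ _)
      (fun q _ _ => pow_nonneg dist_nonneg k)
  have hBt : (B.card : ℝ) * t < S := by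
    calc (B.card:ℝ) * t = ∑ _q ∈ B, m ^ k := by
          rw [Finset.sum_const, hmk, nsmul_eq_mul]
      _ < ∑ q ∈ B, dist q x ^ k := hlt
      _ ≤ S := hle
  have hStS : ((C.card : ℝ) - r + 1) * t = S := by
    rw [htdef, mul_div_cancel₀ _ hd0.ne']
  nlinarith [mul_le_mul_of_nonneg_right hBR ht0]

open Classical in
/-- For any partition of `P` into clusters of size at least `r` with centers in the
metric space (encoded by the center assignment `f`), the sum of the `k`-th powers of
the `r`-th nearest neighbor distances is at most `2^(2k+1) · r` times the total
`k`-th power distance cost; in particular this bounds it against the optimum. -/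
theorem stmt4 {X : Type*} [MetricSpace X] (P : Finset X) (r k : ℕ) (hr : 1 ≤ r)
    (hk : 1 ≤ k) (hcard : r ≤ P.card)
    (f : X → X) (hf : ∀ p ∈ P, r ≤ (P.filter fun q => f q = f p).card) :
    ∑ p ∈ P, rhoNN P r p ^ k ≤
      2 ^ (2 * k + 1) * (r : ℝ) * ∑ p ∈ P, dist p (f p) ^ k := by
  classical
  set D : X → ℝ := fun q => dist q (f q) ^ k with hDdef
  have hD0 : ∀ q, 0 ≤ D q := fun q => pow_nonneg dist_nonneg k
  set nR : X → ℝ := fun q => ((P.filter fun q' => f q' = f q).card : ℝ) with hnRdef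
  set g : X → ℝ := fun q => D q / (nR q - r + 1) with hgdef
  set t : X → ℝ := fun p => ∑ q ∈ P.filter (fun q' => f q' = f p), g q with htdef
  -- per-point bound
  have step1 : ∀ p ∈ P, rhoNN P r p ^ k ≤ 2^k * D p + 2^k * t p := by
    intro p hp
    obtain ⟨m, hm0, hmk, hmc⟩ :=
      markov_count (P.filter fun q => f q = f p) (f p) k r hk hr (hf p hp)
    have hnq_eq : ∀ q ∈ P.filter (fun q' => f q' = f p),
        nR q = ((P.filter fun q' => f q' = f p).card : ℝ) := by
      intro q hq
      have hfq : f q = f p := (Finset.mem_filter.mp hq).2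
      simp only [hnRdef, hfq]
    have hmk' : m ^ k = t p := by
      rw [hmk, htdef, Finset.sum_div]
      apply Finset.sum_congr rfl
      intro q hq
      have hfq : f q = f p := (Finset.mem_filter.mp hq).2
      simp only [hgdef, hDdef]
      rw [hnq_eq q hq, hfq]
    have hcount : r ≤ (P.filter fun q => dist p q ≤ dist p (f p) + m).card := by
      refine le_trans hmc (Finset.card_le_card ?_)
      intro q hq
      simp only [Finset.mem_filter] at hq ⊢
      obtain ⟨⟨hqP, hfq⟩, hdq⟩ := hq
      refine ⟨hqP, ?_⟩
      calc dist p q ≤ dist p (f p) + dist (f p) q := dist_triangle p (f p) q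
        _ ≤ dist p (f p) + m := by rw [dist_comm (f p) q]; linarith
    have hmem : (dist p (f p) + m) ∈
        {R : ℝ | 0 ≤ R ∧ r ≤ (P.filter fun q => dist p q ≤ R).card} :=
      ⟨add_nonneg dist_nonneg hm0, hcount⟩
    have hrho_le : rhoNN P r p ≤ dist p (f p) + m := by
      rw [rhoNN]
      exact csInf_le ⟨0, fun R hR => hR.1⟩ hmem
    have hrho0 : 0 ≤ rhoNN P r p := by
      rw [rhoNN]
      exact le_csInf ⟨_, hmem⟩ (fun R hR => hR.1)
    have hdm : dist p (f p) + m ≤ 2 * max (dist p (f p)) m := by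
      rcases le_total (dist p (f p)) m with h | h
      · rw [max_eq_right h]; linarith
      · rw [max_eq_left h]; linarith
    have hmax : (max (dist p (f p)) m) ^ k ≤ dist p (f p) ^ k + m ^ k := by
      rcases le_total (dist p (f p)) m with h | h
      · rw [max_eq_right h]
        have := pow_nonneg (dist_nonneg : (0:ℝ) ≤ dist p (f p)) k
        linarith
      · rw [max_eq_left h]
        have := pow_nonneg hm0 k
        linarith
    calc rhoNN P r p ^ k ≤ (dist p (f p) + m) ^ k := pow_le_pow_left₀ hrho0 hrho_le k
      _ ≤ (2 * max (dist p (f p)) m) ^ k := by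
          apply pow_le_pow_left₀ (add_nonneg dist_nonneg hm0) hdm
      _ = 2^k * (max (dist p (f p)) m) ^ k := by rw [mul_pow]
      _ ≤ 2^k * (dist p (f p) ^ k + m ^ k) := by
          apply mul_le_mul_of_nonneg_left hmax (by positivity)
      _ = 2^k * D p + 2^k * t p := by rw [hmk']; simp only [hDdef]; ring
  -- swap sums
  have hswap : ∑ p ∈ P, t p ≤ (r : ℝ) * ∑ p ∈ P, D p := by
    have h1 : ∑ p ∈ P, t p
        = ∑ q ∈ P, g q * ((P.filter fun p => f p = f q).card : ℝ) := by
      calc ∑ p ∈ P, t p = ∑ p ∈ P, ∑ q ∈ P, if f q = f p then g q else 0 := by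
            apply Finset.sum_congr rfl
            intro p _
            rw [htdef]
            exact Finset.sum_filter _ _
        _ = ∑ q ∈ P, ∑ p ∈ P, if f q = f p then g q else 0 := Finset.sum_comm
        _ = ∑ q ∈ P, g q * ((P.filter fun p => f p = f q).card : ℝ) := by
            apply Finset.sum_congr rfl
            intro q _
            have hfe : (P.filter fun a => f q = f a) = P.filter fun p => f p = f q :=
              Finset.filter_congr (fun p _ => ⟨Eq.symm, Eq.symm⟩)
            rw [← Finset.sum_filter, Finset.sum_const, nsmul_eq_mul, mul_comm, hfe]
    rw [h1, Finset.mul_sum]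
    apply Finset.sum_le_sum
    intro q hq
    have hrq : (r:ℝ) ≤ nR q := by
      have := hf q hq
      simp only [hnRdef]
      exact_mod_cast this
    have hr1 : (1:ℝ) ≤ (r:ℝ) := by exact_mod_cast hr
    have hpos : (0:ℝ) < nR q - r + 1 := by linarith
    have hnle : nR q ≤ (r:ℝ) * (nR q - r + 1) := by nlinarith
    have hcardq : ((P.filter fun p => f p = f q).card : ℝ) = nR q := rfl
    rw [hcardq, hgdef]
    rw [div_mul_eq_mul_div, div_le_iff₀ hpos]
    nlinarith [mul_le_mul_of_nonneg_left hnle (hD0 q)]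
  -- combine
  have hS0 : (0:ℝ) ≤ ∑ p ∈ P, D p := Finset.sum_nonneg fun q _ => hD0 q
  have hr1 : (1:ℝ) ≤ (r:ℝ) := by exact_mod_cast hr
  have h2k : (2:ℝ)^k * 2 ≤ 2^(2*k+1) := by
    rw [← pow_succ]
    exact pow_le_pow_right₀ (by norm_num) (by omega)
  calc ∑ p ∈ P, rhoNN P r p ^ k ≤ ∑ p ∈ P, (2^k * D p + 2^k * t p) :=
        Finset.sum_le_sum step1
    _ = 2^k * (∑ p ∈ P, D p) + 2^k * (∑ p ∈ P, t p) := by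
        rw [Finset.sum_add_distrib, ← Finset.mul_sum, ← Finset.mul_sum]
    _ ≤ 2^k * (∑ p ∈ P, D p) + 2^k * ((r:ℝ) * ∑ p ∈ P, D p) := by
        have h2 : (0:ℝ) ≤ 2^k := by positivity
        nlinarith [mul_le_mul_of_nonneg_left hswap h2]
    _ ≤ 2 ^ (2 * k + 1) * (r : ℝ) * ∑ p ∈ P, D p := by
        have h2 : (0:ℝ) ≤ 2^k := by positivity
        nlinarith [mul_le_mul_of_nonneg_right (mul_le_mul_of_nonneg_right h2k (le_trans zero_le_one hr1)) hS0,
          mul_nonneg (mul_nonneg h2 (sub_nonneg.mpr hr1)) hS0]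
end

section
/- Any optimal (or arbitrary) r-gather solution with total k-th power distance cost can be converted into a partition in which every cluster has size in [r, 2r) and the total k-th power distance cost increases by at most a factor 2^k. -/
open Classical in
lemma stmt5_aux {X : Type*} [MetricSpace X] (r : ℕ) (hr : 1 ≤ r) :
    ∀ S : Finset X, r ≤ S.card → ∀ c : X,
    ∃ g : X → X, (∀ p ∈ S, g p ∈ S) ∧
      (∀ p ∈ S, r ≤ (S.filter fun q => g q = g p).card ∧
        (S.filter fun q => g q = g p).card < 2 * r) ∧
      (∀ p ∈ S, dist p (g p) ≤ 2 * dist p c) := by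
  intro S
  induction S using Finset.strongInduction with
  | _ S ih =>
    intro hS c
    by_cases hbig : 2 * r ≤ S.card
    · -- split off a block T of size exactly r
      obtain ⟨T, hTS, hTcard⟩ := Finset.exists_subset_card_eq (show r ≤ S.card by omega)
      have hTne : T.Nonempty := Finset.card_pos.mp (by omega)
      have hss : S \ T ⊂ S := Finset.sdiff_ssubset hTS hTne
      have hScard : r ≤ (S \ T).card := by
        rw [Finset.card_sdiff_of_subset hTS]; omega
      obtain ⟨g', hg'mem, hg'card, hg'dist⟩ := ih (S \ T) hss hScard c
      obtain ⟨b, hbT, hbmin⟩ := T.exists_min_image (fun x => dist x c) hTne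
      refine ⟨fun x => if x ∈ T then b else g' x, ?_, ?_, ?_⟩
      · intro p hp
        by_cases hpT : p ∈ T
        · simp only [hpT, if_pos]; exact hTS hbT
        · simp only [hpT, if_neg, if_false]
          exact (Finset.sdiff_subset) (hg'mem p (Finset.mem_sdiff.mpr ⟨hp, hpT⟩))
      · intro p hp
        by_cases hpT : p ∈ T
        · have hfe : (S.filter fun q =>
              (if q ∈ T then b else g' q) = (if p ∈ T then b else g' p)) = T := by
            ext q
            simp only [Finset.mem_filter, hpT, if_pos]
            constructor
            · rintro ⟨hqS, hq⟩
              by_cases hqT : q ∈ T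
              · exact hqT
              · exfalso
                rw [if_neg hqT] at hq
                have := hg'mem q (Finset.mem_sdiff.mpr ⟨hqS, hqT⟩)
                rw [hq] at this
                exact (Finset.mem_sdiff.mp this).2 hbT
            · intro hqT
              exact ⟨hTS hqT, by rw [if_pos hqT]⟩
          rw [hfe, hTcard]
          omega
        · have hpS' : p ∈ S \ T := Finset.mem_sdiff.mpr ⟨hp, hpT⟩
          have hfe : (S.filter fun q =>
              (if q ∈ T then b else g' q) = (if p ∈ T then b else g' p)) =
              ((S \ T).filter fun q => g' q = g' p) := by
            ext q
            simp only [Finset.mem_filter, Finset.mem_sdiff, hpT, if_neg, if_false]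
            constructor
            · rintro ⟨hqS, hq⟩
              by_cases hqT : q ∈ T
              · exfalso
                rw [if_pos hqT] at hq
                have := hg'mem p hpS'
                rw [← hq] at this
                exact (Finset.mem_sdiff.mp this).2 hbT
              · rw [if_neg hqT] at hq
                exact ⟨⟨hqS, hqT⟩, hq⟩
            · rintro ⟨⟨hqS, hqT⟩, hq⟩
              exact ⟨hqS, by rw [if_neg hqT]; exact hq⟩
          rw [hfe]
          exact hg'card p hpS'
      · intro p hp
        by_cases hpT : p ∈ T
        · simp only [hpT, if_pos]
          calc dist p b ≤ dist p c + dist c b := dist_triangle p c b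
          _ ≤ dist p c + dist p c := by
              have := hbmin p hpT
              rw [dist_comm c b]
              linarith
          _ = 2 * dist p c := by ring
        · simp only [hpT, if_neg, if_false]
          exact hg'dist p (Finset.mem_sdiff.mpr ⟨hp, hpT⟩)
    · -- single block
      have hne : S.Nonempty := Finset.card_pos.mp (by omega)
      obtain ⟨b, hbS, hbmin⟩ := S.exists_min_image (fun x => dist x c) hne
      refine ⟨fun _ => b, fun p hp => hbS, ?_, ?_⟩
      · intro p hp
        have : (S.filter fun _ => b = b) = S := Finset.filter_true_of_mem (fun _ _ => rfl)
        rw [this]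
        omega
      · intro p hp
        calc dist p b ≤ dist p c + dist c b := dist_triangle p c b
        _ ≤ dist p c + dist p c := by
            have := hbmin p hp
            rw [dist_comm c b]
            linarith
        _ = 2 * dist p c := by ring

open Classical in
/-- Any `r`-gather solution (a partition of `P` into clusters of size at least `r`,
encoded by the center assignment `f`) can be converted into a partition `g` in which
every cluster has size in `[r, 2r)`, increasing the total `k`-th power distance cost
by at most a factor `2^k`. -/
theorem stmt5 {X : Type*} [MetricSpace X] (P : Finset X) (r k : ℕ) (hr : 1 ≤ r)
    (hk : 1 ≤ k) (hcard : r ≤ P.card)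
    (f : X → X) (hf : ∀ p ∈ P, r ≤ (P.filter fun q => f q = f p).card) :
    ∃ g : X → X,
      (∀ p ∈ P, r ≤ (P.filter fun q => g q = g p).card ∧
        (P.filter fun q => g q = g p).card < 2 * r) ∧
      ∑ p ∈ P, dist p (g p) ^ k ≤ 2 ^ k * ∑ p ∈ P, dist p (f p) ^ k := by
  have key : ∀ v : X, ∃ gv : X → X,
      r ≤ (P.filter fun q => f q = v).card →
      ((∀ p ∈ P.filter fun q => f q = v, gv p ∈ P.filter fun q => f q = v) ∧
       (∀ p ∈ P.filter fun q => f q = v,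
          r ≤ ((P.filter fun q => f q = v).filter fun q => gv q = gv p).card ∧
          ((P.filter fun q => f q = v).filter fun q => gv q = gv p).card < 2 * r) ∧
       (∀ p ∈ P.filter fun q => f q = v, dist p (gv p) ≤ 2 * dist p v)) := by
    intro v
    by_cases h : r ≤ (P.filter fun q => f q = v).card
    · obtain ⟨gv, h1, h2, h3⟩ := stmt5_aux r hr (P.filter fun q => f q = v) h v
      exact ⟨gv, fun _ => ⟨h1, h2, h3⟩⟩
    · exact ⟨id, fun h' => absurd h' h⟩
  choose G hG using key
  refine ⟨fun x => if x ∈ P then G (f x) x else x, ?_, ?_⟩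
  · intro p hp
    obtain ⟨hmem, hcards, hdist⟩ := hG (f p) (hf p hp)
    have hpS : p ∈ P.filter fun q => f q = f p := Finset.mem_filter.mpr ⟨hp, rfl⟩
    have hfe : (P.filter fun q =>
        (if q ∈ P then G (f q) q else q) = (if p ∈ P then G (f p) p else p)) =
        ((P.filter fun q => f q = f p).filter fun q => G (f p) q = G (f p) p) := by
      ext q
      simp only [Finset.mem_filter]
      constructor
      · rintro ⟨hqP, hq⟩
        rw [if_pos hqP, if_pos hp] at hq
        by_cases hfq : f q = f p
        · rw [hfq] at hq
          exact ⟨⟨hqP, hfq⟩, hq⟩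
        · exfalso
          obtain ⟨hmem', _, _⟩ := hG (f q) (hf q hqP)
          have h1 := hmem' q (Finset.mem_filter.mpr ⟨hqP, rfl⟩)
          have h2 := hmem p hpS
          rw [hq] at h1
          exact hfq ((Finset.mem_filter.mp h1).2.symm.trans (Finset.mem_filter.mp h2).2)
      · rintro ⟨⟨hqP, hfq⟩, hq⟩
        refine ⟨hqP, ?_⟩
        rw [if_pos hqP, if_pos hp, hfq]
        exact hq
    rw [hfe]
    exact hcards p hpS
  · have hpt : ∀ p ∈ P, dist p (if p ∈ P then G (f p) p else p) ^ k ≤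
        2 ^ k * dist p (f p) ^ k := by
      intro p hp
      obtain ⟨_, _, hdist⟩ := hG (f p) (hf p hp)
      rw [if_pos hp]
      have h1 : dist p (G (f p) p) ≤ 2 * dist p (f p) :=
        hdist p (Finset.mem_filter.mpr ⟨hp, rfl⟩)
      calc dist p (G (f p) p) ^ k ≤ (2 * dist p (f p)) ^ k :=
            pow_le_pow_left₀ dist_nonneg h1 k
      _ = 2 ^ k * dist p (f p) ^ k := by rw [mul_pow]
    calc ∑ p ∈ P, dist p (if p ∈ P then G (f p) p else p) ^ k
        ≤ ∑ p ∈ P, 2 ^ k * dist p (f p) ^ k := Finset.sum_le_sum hpt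
    _ = 2 ^ k * ∑ p ∈ P, dist p (f p) ^ k := by rw [Finset.mul_sum]
end

section
/- If a clustering algorithm outputs a partition of P into clusters of size at least r such that every point p is at distance at most alpha * rho_r(p) from its cluster center, then its total k-th power distance cost is at most alpha^k * 2^(2k+1) * r times the optimal total k-th power distance cost. -/
lemma rhoNN_nonneg {X : Type*} [MetricSpace X] (P : Finset X) (r : ℕ) (p : X) :
    0 ≤ rhoNN P r p :=
  Real.sInf_nonneg (fun _ hx => hx.1)

lemma rhoNN_le {X : Type*} [MetricSpace X] (P : Finset X) (r : ℕ) (p : X) {R : ℝ}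
    (hR : 0 ≤ R) (h : r ≤ (P.filter fun q => dist p q ≤ R).card) : rhoNN P r p ≤ R :=
  csInf_le ⟨0, fun _ hx => hx.1⟩ ⟨hR, h⟩

open Classical in
lemma rhoNN_key {X : Type*} [MetricSpace X] (P : Finset X) (r k : ℕ) (hr : 1 ≤ r)
    (hk : 1 ≤ k) (g : X → X) (hg : ∀ p ∈ P, r ≤ (P.filter fun q => g q = g p).card) :
    ∑ p ∈ P, rhoNN P r p ^ k ≤ 2 ^ (k + 1) * (r : ℝ) * ∑ p ∈ P, dist p (g p) ^ k := by
  classical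
  set t : X → ℝ := fun q => dist q (g q) ^ k with ht
  have htn : ∀ q, 0 ≤ t q := fun q => pow_nonneg dist_nonneg _
  set n : X → ℕ := fun p => (P.filter fun q => g q = g p).card with hn
  set D : X → ℝ := fun p => ((n p - r + 1 : ℕ) : ℝ) with hD
  have hDpos : ∀ p, 0 < D p := by
    intro p
    simp only [hD]
    exact_mod_cast Nat.succ_pos _
  set S : X → ℝ := fun p => ∑ q ∈ P.filter (fun q => g q = g p), t q with hS
  have hSn : ∀ p, 0 ≤ S p := fun p => Finset.sum_nonneg fun q _ => htn q
  set M : X → ℝ := fun p => (S p / D p) ^ ((k : ℝ)⁻¹) with hM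
  have hMn : ∀ p, 0 ≤ M p := fun p => Real.rpow_nonneg (div_nonneg (hSn p) (hDpos p).le) _
  have hMk : ∀ p, M p ^ k = S p / D p := by
    intro p
    exact Real.rpow_inv_natCast_pow (div_nonneg (hSn p) (hDpos p).le) (by omega)
  -- same cluster ⇒ same n, S, D, M
  have hsame : ∀ p q, g q = g p → n q = n p ∧ S q = S p := by
    intro p q hqp
    have : (fun q' => g q' = g q) = (fun q' => g q' = g p) := funext fun x => by rw [hqp]
    constructor
    · simp only [hn, this]
    · simp only [hS, this]
  -- Step A : rhoNN P r p ≤ dist p (g p) + M p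
  have stepA : ∀ p ∈ P, rhoNN P r p ≤ dist p (g p) + M p := by
    intro p hp
    apply rhoNN_le _ _ _ (add_nonneg dist_nonneg (hMn p))
    set C : Finset X := P.filter (fun q => g q = g p) with hC
    set Good : Finset X := C.filter (fun q => dist q (g q) ≤ M p) with hGood
    have hsub : Good ⊆ P.filter fun q => dist p q ≤ dist p (g p) + M p := by
      intro q hq
      simp only [hGood, hC, Finset.mem_filter] at hq
      obtain ⟨⟨hqP, hgq⟩, hdq⟩ := hq
      simp only [Finset.mem_filter]
      refine ⟨hqP, ?_⟩
      calc dist p q ≤ dist p (g p) + dist (g p) q := dist_triangle _ _ _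
        _ = dist p (g p) + dist q (g q) := by rw [hgq, dist_comm (g p) q]
        _ ≤ dist p (g p) + M p := by linarith
    refine le_trans ?_ (Finset.card_le_card hsub)
    by_contra hcon
    push_neg at hcon
    set Bad : Finset X := C.filter (fun q => ¬ dist q (g q) ≤ M p) with hBad
    have hsplit : Good.card + Bad.card = C.card :=
      Finset.card_filter_add_card_filter_not _
    have hnC : C.card = n p := rfl
    have hrn : r ≤ n p := hg p hp
    have hBadcard : n p - r + 1 ≤ Bad.card := by omega
    have hBadne : Bad.Nonempty := Finset.card_pos.mp (by omega)
    have h1 : ∀ q ∈ Bad, M p ^ k < t q := by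
      intro q hq
      simp only [hBad, Finset.mem_filter, not_le] at hq
      exact pow_lt_pow_left₀ hq.2 (hMn p) (by omega)
    have h2 : (Bad.card : ℝ) * M p ^ k < ∑ q ∈ Bad, t q := by
      have := Finset.sum_lt_sum_of_nonempty hBadne h1
      simpa [Finset.sum_const, nsmul_eq_mul] using this
    have h3 : ∑ q ∈ Bad, t q ≤ S p :=
      Finset.sum_le_sum_of_subset_of_nonneg (Finset.filter_subset _ _) fun q _ _ => htn q
    have h4 : D p * M p ^ k = S p := by
      rw [hMk p, mul_div_cancel₀ _ (hDpos p).ne']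
    have h5 : D p ≤ (Bad.card : ℝ) := by simp only [hD]; exact_mod_cast hBadcard
    have h6 : D p * M p ^ k ≤ (Bad.card : ℝ) * M p ^ k :=
      mul_le_mul_of_nonneg_right h5 (pow_nonneg (hMn p) _)
    linarith
  -- Step B : pointwise power bound
  have stepB : ∀ p ∈ P, rhoNN P r p ^ k ≤ 2 ^ k * (t p + S p / D p) := by
    intro p hp
    have h0 : 0 ≤ rhoNN P r p := rhoNN_nonneg _ _ _
    have h1 : rhoNN P r p ^ k ≤ (dist p (g p) + M p) ^ k :=
      pow_le_pow_left₀ h0 (stepA p hp) k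
    have h2 : dist p (g p) + M p ≤ 2 * max (dist p (g p)) (M p) := by
      have := le_max_left (dist p (g p)) (M p)
      have := le_max_right (dist p (g p)) (M p)
      linarith
    have hmn : 0 ≤ max (dist p (g p)) (M p) := le_trans dist_nonneg (le_max_left _ _)
    have h3 : (dist p (g p) + M p) ^ k ≤ (2 * max (dist p (g p)) (M p)) ^ k :=
      pow_le_pow_left₀ (add_nonneg dist_nonneg (hMn p)) h2 k
    have h4 : max (dist p (g p)) (M p) ^ k ≤ t p + M p ^ k := by
      rcases max_cases (dist p (g p)) (M p) with ⟨hmax, _⟩ | ⟨hmax, _⟩ <;> rw [hmax]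
      · exact le_add_of_nonneg_right (pow_nonneg (hMn p) _)
      · exact le_add_of_nonneg_left (htn p)
    calc rhoNN P r p ^ k ≤ (2 * max (dist p (g p)) (M p)) ^ k := le_trans h1 h3
      _ = 2 ^ k * max (dist p (g p)) (M p) ^ k := mul_pow _ _ _
      _ ≤ 2 ^ k * (t p + M p ^ k) := by
          apply mul_le_mul_of_nonneg_left h4 (by positivity)
      _ = 2 ^ k * (t p + S p / D p) := by rw [hMk p]
  -- Step C : ∑ S p / D p ≤ r * ∑ t
  have stepC : ∑ p ∈ P, S p / D p ≤ (r : ℝ) * ∑ p ∈ P, t p := by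
    have hCeq : ∀ p ∈ P, S p / D p =
        ∑ q ∈ P, if g q = g p then t q / D q else 0 := by
      intro p hp
      rw [← Finset.sum_filter]
      simp only [hS, Finset.sum_div]
      apply Finset.sum_congr rfl
      intro q hq
      simp only [Finset.mem_filter] at hq
      have : D q = D p := by
        simp only [hD, (hsame p q hq.2).1]
      rw [this]
    calc ∑ p ∈ P, S p / D p
        = ∑ p ∈ P, ∑ q ∈ P, if g q = g p then t q / D q else 0 :=
          Finset.sum_congr rfl hCeq
      _ = ∑ q ∈ P, ∑ p ∈ P, if g q = g p then t q / D q else 0 := Finset.sum_comm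
      _ = ∑ q ∈ P, (n q : ℝ) * (t q / D q) := by
          apply Finset.sum_congr rfl
          intro q hq
          rw [← Finset.sum_filter, Finset.sum_const, nsmul_eq_mul]
          congr 2
          simp only [hn]
          apply Finset.card_bij (fun a _ => a)
          · intro a ha
            simp only [Finset.mem_filter] at ha ⊢
            exact ⟨ha.1, ha.2.symm⟩
          · intro a _ b _ h; exact h
          · intro b hb
            simp only [Finset.mem_filter] at hb
            exact ⟨b, by simp only [Finset.mem_filter]; exact ⟨hb.1, hb.2.symm⟩, rfl⟩
      _ ≤ ∑ q ∈ P, (r : ℝ) * t q := by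
          apply Finset.sum_le_sum
          intro q hq
          have hrn : r ≤ n q := hg q hq
          obtain ⟨m, hm⟩ := Nat.exists_eq_add_of_le hrn
          have hnat : n q ≤ r * (n q - r + 1) := by
            rw [hm]
            have : r + m - r + 1 = m + 1 := by omega
            rw [this]
            calc r + m ≤ r + r * m := by
                  have : m ≤ r * m := Nat.le_mul_of_pos_left m hr
                  omega
              _ = r * (m + 1) := by ring
          have hreal : (n q : ℝ) ≤ (r : ℝ) * D q := by
            simp only [hD]
            exact_mod_cast hnat
          calc (n q : ℝ) * (t q / D q) ≤ (r : ℝ) * D q * (t q / D q) :=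
                mul_le_mul_of_nonneg_right hreal (div_nonneg (htn q) (hDpos q).le)
            _ = (r : ℝ) * (D q * (t q / D q)) := by ring
            _ = (r : ℝ) * t q := by rw [mul_div_cancel₀ _ (hDpos q).ne']
      _ = (r : ℝ) * ∑ q ∈ P, t q := (Finset.mul_sum _ _ _).symm
  -- Assemble
  have hT : 0 ≤ ∑ p ∈ P, t p := Finset.sum_nonneg fun p _ => htn p
  calc ∑ p ∈ P, rhoNN P r p ^ k
      ≤ ∑ p ∈ P, 2 ^ k * (t p + S p / D p) := Finset.sum_le_sum stepB
    _ = 2 ^ k * (∑ p ∈ P, t p + ∑ p ∈ P, S p / D p) := by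
        rw [← Finset.sum_add_distrib, Finset.mul_sum]
    _ ≤ 2 ^ k * (∑ p ∈ P, t p + (r : ℝ) * ∑ p ∈ P, t p) := by
        apply mul_le_mul_of_nonneg_left (by linarith) (by positivity)
    _ = 2 ^ k * (1 + (r : ℝ)) * ∑ p ∈ P, t p := by ring
    _ ≤ 2 ^ k * (2 * (r : ℝ)) * ∑ p ∈ P, t p := by
        apply mul_le_mul_of_nonneg_right _ hT
        apply mul_le_mul_of_nonneg_left _ (by positivity)
        have : (1 : ℝ) ≤ (r : ℝ) := by exact_mod_cast hr
        linarith
    _ = 2 ^ (k + 1) * (r : ℝ) * ∑ p ∈ P, t p := by ring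

open Classical in
/-- If a clustering `f` of `P` into clusters of size at least `r` places every point
`p` at distance at most `α · ρ_r(p)` from its center, then its total `k`-th power
distance cost is at most `α^k · 2^(2k+1) · r` times the optimum (i.e. at most that
factor times the cost of any valid clustering `g`). -/
theorem stmt6 {X : Type*} [MetricSpace X] (P : Finset X) (r k : ℕ) (hr : 1 ≤ r)
    (hk : 1 ≤ k) (hcard : r ≤ P.card) (α : ℝ) (hα : 1 ≤ α)
    (f : X → X) (hf : ∀ p ∈ P, r ≤ (P.filter fun q => f q = f p).card)
    (hpt : ∀ p ∈ P, dist p (f p) ≤ α * rhoNN P r p)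
    (g : X → X) (hg : ∀ p ∈ P, r ≤ (P.filter fun q => g q = g p).card) :
    ∑ p ∈ P, dist p (f p) ^ k ≤
      α ^ k * 2 ^ (2 * k + 1) * (r : ℝ) * ∑ p ∈ P, dist p (g p) ^ k := by
  classical
  have hαk : (0 : ℝ) ≤ α ^ k := pow_nonneg (by linarith) _
  have h1 : ∑ p ∈ P, dist p (f p) ^ k ≤ α ^ k * ∑ p ∈ P, rhoNN P r p ^ k := by
    rw [Finset.mul_sum]
    apply Finset.sum_le_sum
    intro p hp
    calc dist p (f p) ^ k ≤ (α * rhoNN P r p) ^ k :=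
          pow_le_pow_left₀ dist_nonneg (hpt p hp) k
      _ = α ^ k * rhoNN P r p ^ k := mul_pow _ _ _
  have h2 := rhoNN_key P r k hr hk g hg
  have hT : 0 ≤ ∑ p ∈ P, dist p (g p) ^ k :=
    Finset.sum_nonneg fun p _ => pow_nonneg dist_nonneg _
  have hpow : (2 : ℝ) ^ (k + 1) ≤ 2 ^ (2 * k + 1) :=
    pow_le_pow_right₀ one_le_two (by omega)
  calc ∑ p ∈ P, dist p (f p) ^ k
      ≤ α ^ k * ∑ p ∈ P, rhoNN P r p ^ k := h1
    _ ≤ α ^ k * (2 ^ (k + 1) * (r : ℝ) * ∑ p ∈ P, dist p (g p) ^ k) :=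
        mul_le_mul_of_nonneg_left h2 hαk
    _ = α ^ k * 2 ^ (k + 1) * (r : ℝ) * ∑ p ∈ P, dist p (g p) ^ k := by ring
    _ ≤ α ^ k * 2 ^ (2 * k + 1) * (r : ℝ) * ∑ p ∈ P, dist p (g p) ^ k := by
        apply mul_le_mul_of_nonneg_right _ hT
        apply mul_le_mul_of_nonneg_right _ (by positivity)
        exact mul_le_mul_of_nonneg_left hpow hαk
end

section
/- Let S be a subset of P satisfying (mutual exclusivity) no point of P is within distance R of two distinct points of S, and (covering) every point of P is within distance 2R (via a two-hop chain of length-R steps) of some point of S. If additionally every point of S has at least r points of P within distance R, then assigning each point of P to the cluster of a nearest point of S yields clusters of size at least r with radius at most 2R. -/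
open Classical in
/-- If `S ⊆ P` satisfies mutual exclusivity (no point of `P` is within distance `R` of
two distinct points of `S`) and covering (every point of `P` reaches `S` by a two-hop
chain of length-`R` steps), and every `s ∈ S` has at least `r` points of `P` within
distance `R`, then assigning each point of `P` to a nearest point of `S` yields
clusters of size at least `r` and radius at most `2R`. -/
theorem stmt10 {X : Type*} [MetricSpace X] (P : Finset X) (R : ℝ) (hR : 0 < R)
    (r : ℕ) (hr : 1 ≤ r)
    (S : Finset X) (hSP : S ⊆ P)
    (hmutex : ∀ q ∈ S, ∀ q' ∈ S, q ≠ q' → ¬ ∃ p ∈ P, dist p q ≤ R ∧ dist p q' ≤ R)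
    (hcov : ∀ p ∈ P, ∃ p' ∈ P, ∃ q ∈ S, dist p p' ≤ R ∧ dist p' q ≤ R)
    (hsize : ∀ q ∈ S, r ≤ (P.filter fun p => dist p q ≤ R).card)
    (c : X → X)
    (hc : ∀ p ∈ P, c p ∈ S ∧ ∀ q ∈ S, dist p (c p) ≤ dist p q) :
    (∀ q ∈ S, r ≤ (P.filter fun p => c p = q).card) ∧
    (∀ p ∈ P, dist p (c p) ≤ 2 * R) := by
  constructor
  · intro q hq
    refine le_trans (hsize q hq) (Finset.card_le_card ?_)
    intro p hp
    rw [Finset.mem_filter] at hp ⊢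
    obtain ⟨hpP, hpq⟩ := hp
    refine ⟨hpP, ?_⟩
    by_contra hne
    exact hmutex (c p) ((hc p hpP).1) q hq hne
      ⟨p, hpP, le_trans ((hc p hpP).2 q hq) hpq, hpq⟩
  · intro p hp
    obtain ⟨p', _, q, hq, h1, h2⟩ := hcov p hp
    calc dist p (c p) ≤ dist p q := (hc p hp).2 q hq
      _ ≤ dist p p' + dist p' q := dist_triangle _ _ _
      _ ≤ 2 * R := by linarith
end

section
/- In the pointwise r-gather algorithm, every cluster ever present in the maintained family has size at least r. -/
/-- The subgraph of the `k`-th power of `G` induced by the vertex set `A`. -/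
def inducedPower {V : Type*} (G : SimpleGraph V) (A : Set V) (k : ℕ) : SimpleGraph V where
  Adj u v := u ≠ v ∧ u ∈ A ∧ v ∈ A ∧ withinDist G k u v
  symm := by
    constructor
    rintro u v ⟨h1, h2, h3, w, hw⟩
    exact ⟨h1.symm, h3, h2, w.reverse, by simpa using hw⟩
  loopless := by constructor; rintro u ⟨h1, -⟩; exact h1 rfl

open Classical in
/-- Pointwise `r`-gather algorithm (Algorithm 4), size invariant: at any time of the
algorithm, every cluster present in the maintained family has size at least `r`.
Clusters are the fibers of the partial center assignment `c i`. -/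
theorem stmt12 {X : Type*} [MetricSpace X]
    (P : Finset X) (r : ℕ) (hr : 1 ≤ r)
    (C : ℝ) (hC : 1 ≤ C) (β : ℕ) (hβ : 1 ≤ β) (δ : ℝ) (hδ : 0 < δ)
    (G : ℕ → SimpleGraph X)
    (c : ℕ → X → Option X)
    (Pp Ppp Pppp : ℕ → Finset X) (S : ℕ → Finset X)
    -- `G i` is a `C`-approximate `(R_i, r)`-near neighbor graph of `P`
    (hGP : ∀ i p q, (G i).Adj p q → p ∈ P ∧ q ∈ P)
    (hG1 : ∀ i p q, (G i).Adj p q → dist p q ≤ C * (2 ^ i * δ))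
    (hG2 : ∀ i, ∀ p ∈ P,
      r ≤ (P.filter fun q => (G i).Adj p q ∨ q = p).card ∨
      ∀ q ∈ P, dist p q ≤ 2 ^ i * δ → ((G i).Adj p q ∨ q = p))
    -- `P'_i`: vertices with at least `r` vertices in their closed `G i`-neighborhood
    (hPp : ∀ i, Pp i = P.filter fun p =>
      r ≤ (P.filter fun q => (G i).Adj p q ∨ q = p).card)
    -- `P''_i`: vertices of `P'_i` whose closed neighborhood is entirely unclustered
    (hPpp : ∀ i, Ppp i = (Pp i).filter fun p =>
      ∀ q ∈ P, ((G i).Adj p q ∨ q = p) → c i q = Option.none)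
    -- `S i` is a `β`-ruling set of `(G_i²)[P''_i]`
    (hS1 : ∀ i, S i ⊆ Ppp i)
    (hS2 : ∀ i, ∀ s ∈ S i, ∀ s' ∈ S i, s ≠ s' →
      ¬ (inducedPower (G i) (↑(Ppp i)) 2).Adj s s')
    (hS3 : ∀ i, ∀ p ∈ Ppp i, ∃ s ∈ S i,
      withinDist (inducedPower (G i) (↑(Ppp i)) 2) β p s)
    -- `P'''_i`: unclustered points at `G i`-distance at most `2β` from `S i`
    (hPppp : ∀ i, Pppp i = P.filter fun p =>
      c i p = Option.none ∧ ∃ s ∈ S i, withinDist (G i) (2 * β) p s)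
    -- no point is clustered initially, and points outside `P` are never clustered
    (hinit : ∀ p, c 0 p = Option.none)
    (hout : ∀ i p, p ∉ P → c i p = Option.none)
    -- phase `i`: each point of `S i` becomes the center of a new cluster
    (hU1 : ∀ i, ∀ s ∈ S i, c (i + 1) s = some s)
    -- each point of `P'''_i` joins the cluster of a closest member of `S i`
    (hU2 : ∀ i, ∀ p ∈ Pppp i, ∃ s ∈ S i, c (i + 1) p = some s ∧
      withinDist (G i) (2 * β) p s ∧
      ∀ s' ∈ S i, ∀ m : ℕ, withinDist (G i) m p s' → withinDist (G i) m p s)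
    -- each unclustered point of `P'_i \ P'''_i` joins an adjacent existing cluster
    (hU3 : ∀ i, ∀ p ∈ Pp i, c i p = Option.none → p ∉ Pppp i →
      ∃ q ∈ P, (G i).Adj p q ∧ (c i q).isSome ∧ c (i + 1) p = c i q)
    -- already clustered points keep their centers
    (hU4 : ∀ i p s, c i p = some s → c (i + 1) p = some s)
    -- no other point is clustered in phase `i`
    (hU5 : ∀ i p, c i p = Option.none → p ∉ Pppp i → p ∉ Pp i →
      c (i + 1) p = Option.none) :
    ∀ i, ∀ s : X, (∃ p, c i p = some s) →
      r ≤ (P.filter fun q => c i q = some s).card := by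
  classical
  intro i
  induction i with
  | zero =>
    rintro s ⟨p, hp⟩
    simp [hinit] at hp
  | succ i ih =>
    rintro s ⟨p, hp⟩
    by_cases hold : ∃ p, c i p = some s
    · have hsub : (P.filter fun q => c i q = some s) ⊆
          (P.filter fun q => c (i+1) q = some s) := by
        intro q hq
        simp only [Finset.mem_filter] at hq ⊢
        exact ⟨hq.1, hU4 i q s hq.2⟩
      exact le_trans (ih s hold) (Finset.card_le_card hsub)
    · push_neg at hold
      have hsS : s ∈ S i := by
        cases hcip : c i p with
        | some t =>
          have h4 := hU4 i p t hcip
          rw [hp] at h4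
          obtain rfl : s = t := Option.some_inj.mp h4
          exact absurd hcip (hold p)
        | none =>
          by_cases hpppp : p ∈ Pppp i
          · obtain ⟨s', hs', hcs', -, -⟩ := hU2 i p hpppp
            rw [hp] at hcs'
            obtain rfl : s = s' := Option.some_inj.mp hcs'
            exact hs'
          · by_cases hpp : p ∈ Pp i
            · obtain ⟨q, hqP, hadj, hsome, heq⟩ := hU3 i p hpp hcip hpppp
              rw [hp] at heq
              exact absurd heq.symm (hold q)
            · have h5 := hU5 i p hcip hpppp hpp
              rw [hp] at h5; simp at h5
      have hsPpp : s ∈ Ppp i := hS1 i hsS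
      have hsPp : s ∈ Pp i := by
        rw [hPpp i] at hsPpp; exact (Finset.mem_filter.mp hsPpp).1
      have hunclust : ∀ q ∈ P, ((G i).Adj s q ∨ q = s) → c i q = none := by
        rw [hPpp i] at hsPpp; exact (Finset.mem_filter.mp hsPpp).2
      have hcard : r ≤ (P.filter fun q => (G i).Adj s q ∨ q = s).card := by
        rw [hPp i] at hsPp; exact (Finset.mem_filter.mp hsPp).2
      have hsub : (P.filter fun q => (G i).Adj s q ∨ q = s) ⊆
          P.filter fun q => c (i+1) q = some s := by
        intro q hq
        simp only [Finset.mem_filter] at hq ⊢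
        obtain ⟨hqP, hadj⟩ := hq
        refine ⟨hqP, ?_⟩
        have hqnone := hunclust q hqP hadj
        have hwd1 : withinDist (G i) 1 q s := by
          rcases hadj with h | h
          · exact ⟨SimpleGraph.Walk.cons h.symm SimpleGraph.Walk.nil, by simp⟩
          · subst h; exact ⟨SimpleGraph.Walk.nil, by simp⟩
        have hqPppp : q ∈ Pppp i := by
          rw [hPppp i]
          refine Finset.mem_filter.mpr ⟨hqP, hqnone, s, hsS, ?_⟩
          obtain ⟨w, hw⟩ := hwd1
          exact ⟨w, le_trans hw (by omega)⟩
        obtain ⟨s', hs'S, hcq, hwd, hmin⟩ := hU2 i q hqPppp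
        have hwd1' : withinDist (G i) 1 q s' := hmin s hsS 1 hwd1
        by_cases hss : s' = s
        · rw [hss] at hcq; exact hcq
        · exfalso
          apply hS2 i s hsS s' hs'S (Ne.symm hss)
          refine ⟨Ne.symm hss, Finset.mem_coe.mpr (hS1 i hsS),
            Finset.mem_coe.mpr (hS1 i hs'S), ?_⟩
          obtain ⟨w1, hw1⟩ := hwd1
          obtain ⟨w2, hw2⟩ := hwd1'
          refine ⟨w1.reverse.append w2, ?_⟩
          simp only [SimpleGraph.Walk.length_append, SimpleGraph.Walk.length_reverse]
          omega
      exact le_trans hcard (Finset.card_le_card hsub)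
end

section
/- In the incremental r-gather algorithm, the maintained net N_i at every level i satisfies: any two distinct points of N_i are at distance greater than 4*C*2^i, and every point of the current point set is within distance 4*C^2*2^i of N_i. -/
/-- Incremental `r`-gather algorithm, net invariant at level `i`: if before an
insertion the net `N` satisfies separation (pairwise distances `> 4·C·2^i`) and
covering (every point of `P` within `4·C²·2^i` of `N`), and a point `p` is inserted —
either joining the net (certified by the approximate nearest neighbor oracle:
all net points at distance `> 4·C·2^i`) or not (certified: some net point at distance
`≤ 4·C²·2^i`) — then the new net `N'` satisfies the same separation and covering
invariants for `P ∪ {p}`. -/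
theorem stmt17 {X : Type*} [MetricSpace X] (C : ℝ) (hC : 1 ≤ C) (i : ℕ)
    (P N : Finset X) (hNP : N ⊆ P)
    (hsep : ∀ u ∈ N, ∀ v ∈ N, u ≠ v → 4 * C * 2 ^ i < dist u v)
    (hcov : ∀ u ∈ P, ∃ v ∈ N, dist u v ≤ 4 * C ^ 2 * 2 ^ i)
    (p : X) (N' : Finset X) [DecidableEq X]
    (hbranch :
      (N' = insert p N ∧ ∀ q ∈ N, 4 * C * 2 ^ i < dist p q) ∨
      (N' = N ∧ ∃ q ∈ N, dist p q ≤ 4 * C ^ 2 * 2 ^ i)) :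
    (∀ u ∈ N', ∀ v ∈ N', u ≠ v → 4 * C * 2 ^ i < dist u v) ∧
    (∀ u ∈ insert p P, ∃ v ∈ N', dist u v ≤ 4 * C ^ 2 * 2 ^ i) := by

  have hpos : (0:ℝ) < 4 * C * 2 ^ i := by positivity
  have hle : 4 * C * 2 ^ i ≤ 4 * C ^ 2 * 2 ^ i := by nlinarith [pow_pos (by norm_num : (0:ℝ)<2) i]
  rcases hbranch with ⟨rfl, hfar⟩ | ⟨rfl, q, hqN, hq⟩
  · constructor
    · intro u hu v hv huv
      simp only [Finset.mem_insert] at hu hv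
      rcases hu with rfl | hu <;> rcases hv with rfl | hv
      · exact absurd rfl huv
      · exact hfar v hv
      · rw [dist_comm]; exact hfar u hu
      · exact hsep u hu v hv huv
    · intro u hu
      simp only [Finset.mem_insert] at hu
      rcases hu with rfl | hu
      · exact ⟨u, Finset.mem_insert_self _ _, by simp; positivity⟩
      · obtain ⟨v, hv, hd⟩ := hcov u hu
        exact ⟨v, Finset.mem_insert_of_mem hv, hd⟩
  · refine ⟨hsep, ?_⟩
    intro u hu
    simp only [Finset.mem_insert] at hu
    rcases hu with rfl | hu
    · exact ⟨q, hqN, hq⟩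
    · exact hcov u hu
end

section
/- In the incremental r-gather algorithm, after any operation, for every level i and every center u in N_i, the maintained set Q_i(u) satisfies Q_i(u) is a subset of the points within distance 2*C*2^i of u, and |Q_i(u)| >= min(r, number of points of P within distance 2*2^i of u). -/
open Classical in
/-- Incremental `r`-gather algorithm, counter invariant at level `i`: given the net
invariants for `N`, the pool invariant for `U`, and the counter invariants for `Q`
(each `Q u` lies in `P` within distance `2·C·2^i` of `u` and has size at least
`min(r, |P ∩ ball(u, 2·2^i)|)`), inserting a point `p` — with the two branches of
Algorithm 8 certified by the `C`-approximate nearest neighbor oracle — preserves the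
counter invariants for the new state `(insert p P, N', U', Q')`. -/
theorem stmt18 {X : Type*} [MetricSpace X] (C : ℝ) (hC : 1 ≤ C) (i r : ℕ)
    (P N U : Finset X) (Q : X → Finset X)
    (hNP : N ⊆ P) (hUP : U ⊆ P)
    -- net invariants
    (hsep : ∀ u ∈ N, ∀ v ∈ N, u ≠ v → 4 * C * 2 ^ i < dist u v)
    (hcov : ∀ q ∈ P, ∃ u ∈ N, dist q u ≤ 4 * C ^ 2 * 2 ^ i)
    -- pool invariant: unassigned far points are in `U`
    (hUinv : ∀ q ∈ P, q ∉ N → (∀ u ∈ N, 2 * C * 2 ^ i < dist q u) → q ∈ U)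
    -- counter invariants before the insertion
    (hQsub : ∀ u ∈ N, ∀ q ∈ Q u, q ∈ P ∧ dist q u ≤ 2 * C * 2 ^ i)
    (hQcard : ∀ u ∈ N,
      min r (P.filter fun q => dist q u ≤ 2 * 2 ^ i).card ≤ (Q u).card)
    (p : X) (hp : p ∉ P)
    (N' U' : Finset X) (Q' : X → Finset X)
    (hbranch :
      -- branch (a): `p` joins the net and pulls close pool points into `Q' p`
      (N' = insert p N ∧ (∀ u ∈ N, 4 * C * 2 ^ i < dist p u) ∧
        (∀ u ∈ N, Q' u = Q u) ∧
        ∃ W ⊆ U, (∀ w ∈ W, dist w p ≤ 2 * C * 2 ^ i) ∧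
          Q' p = insert p W ∧ U' = U \ W ∧
          (r ≤ (Q' p).card ∨ ∀ u ∈ U \ W, 2 * 2 ^ i < dist u p)) ∨
      -- branch (b): `p` does not join the net; `q` is its `C`-approximate nearest
      -- neighbor in `N`
      (N' = N ∧ ∃ q ∈ N, (∀ u ∈ N, dist p q ≤ C * dist p u) ∧
        ((dist p q ≤ 2 * C * 2 ^ i ∧ Q' q = insert p (Q q) ∧
            (∀ u ∈ N, u ≠ q → Q' u = Q u) ∧ U' = U) ∨
         ((∀ u ∈ N, 2 * 2 ^ i < dist p u) ∧ U' = insert p U ∧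
            ∀ u ∈ N, Q' u = Q u)))) :
    (∀ u ∈ N', ∀ q ∈ Q' u, q ∈ insert p P ∧ dist q u ≤ 2 * C * 2 ^ i) ∧
    (∀ u ∈ N',
      min r ((insert p P).filter fun q => dist q u ≤ 2 * 2 ^ i).card ≤ (Q' u).card) := by
  have h2 : (0:ℝ) < 2 ^ i := by positivity
  obtain ⟨hN', hfar, hQeq, W, hWU, hWd, hQp, hU', halt⟩ | ⟨hN', q0, hq0N, hann, hcase⟩ := hbranch
  · constructor
    · intro u hu t ht
      rw [hN', Finset.mem_insert] at hu
      rcases hu with rfl | hu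
      · rw [hQp, Finset.mem_insert] at ht
        rcases ht with rfl | ht
        · refine ⟨Finset.mem_insert_self _ _, ?_⟩
          simp only [dist_self]; nlinarith
        · exact ⟨Finset.mem_insert_of_mem (hUP (hWU ht)), hWd t ht⟩
      · rw [hQeq u hu] at ht
        obtain ⟨h1, h2'⟩ := hQsub u hu t ht
        exact ⟨Finset.mem_insert_of_mem h1, h2'⟩
    · intro u hu
      rw [hN', Finset.mem_insert] at hu
      rcases hu with rfl | hu
      · rcases halt with hr | hfarU
        · exact le_trans (min_le_left _ _) hr
        · rw [hQp]
          refine le_trans (min_le_right _ _) (Finset.card_le_card ?_)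
          intro t ht
          simp only [Finset.mem_filter, Finset.mem_insert] at ht
          obtain ⟨ht1, ht2⟩ := ht
          rcases ht1 with rfl | ht1
          · exact Finset.mem_insert_self _ _
          · have htN : t ∉ N := by
              intro htN
              have h3 := hfar t htN
              rw [dist_comm] at h3
              nlinarith
            have htU : t ∈ U := by
              refine hUinv t ht1 htN fun v hv => ?_
              have h3 := hfar v hv
              have h4 := dist_triangle u t v
              nlinarith [dist_comm u t, dist_comm t u]
            by_cases htW : t ∈ W
            · exact Finset.mem_insert_of_mem htW
            · exact absurd ht2 (not_le.mpr (hfarU t (Finset.mem_sdiff.mpr ⟨htU, htW⟩)))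
      · rw [hQeq u hu]
        have hpf : ¬ dist p u ≤ 2 * 2 ^ i := by
          have := hfar u hu; push_neg; nlinarith
        have : (insert p P).filter (fun t => dist t u ≤ 2 * 2 ^ i)
            = P.filter (fun t => dist t u ≤ 2 * 2 ^ i) := by
          rw [Finset.filter_insert, if_neg hpf]
        rw [this]
        exact hQcard u hu
  · -- key geometric fact: if dist p u ≤ 2*2^i for u ∈ N, then u = q0
    have hkey : ∀ u ∈ N, dist p u ≤ 2 * 2 ^ i → u = q0 := by
      intro u hu hd
      by_contra hne
      have h3 := hsep u hu q0 hq0N hne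
      have h4 := hann u hu
      have h5 := dist_triangle u p q0
      rw [dist_comm u p] at h5
      nlinarith
    rcases hcase with ⟨hdq, hQq, hQo, hU'⟩ | ⟨hfar2, hU', hQo⟩
    · constructor
      · intro u hu t ht
        rw [hN'] at hu
        by_cases hue : u = q0
        · subst hue
          rw [hQq, Finset.mem_insert] at ht
          rcases ht with rfl | ht
          · exact ⟨Finset.mem_insert_self _ _, by rw [dist_comm] at hdq ⊢; exact hdq⟩
          · obtain ⟨h1, h2'⟩ := hQsub u hu t ht
            exact ⟨Finset.mem_insert_of_mem h1, h2'⟩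
        · rw [hQo u hu hue] at ht
          obtain ⟨h1, h2'⟩ := hQsub u hu t ht
          exact ⟨Finset.mem_insert_of_mem h1, h2'⟩
      · intro u hu
        rw [hN'] at hu
        by_cases hue : u = q0
        · subst hue
          rw [hQq]
          have hpQ : p ∉ Q u := fun h => hp (hQsub u hu p h).1
          rw [Finset.card_insert_of_notMem hpQ]
          have hfil : ((insert p P).filter fun t => dist t u ≤ 2 * 2 ^ i).card
              ≤ (P.filter fun t => dist t u ≤ 2 * 2 ^ i).card + 1 := by
            rw [Finset.filter_insert]
            split
            · rw [Finset.card_insert_of_notMem (fun h => hp (Finset.mem_filter.mp h).1)]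
            · omega
          calc min r ((insert p P).filter fun t => dist t u ≤ 2 * 2 ^ i).card
              ≤ min r ((P.filter fun t => dist t u ≤ 2 * 2 ^ i).card + 1) :=
                min_le_min_left _ hfil
            _ ≤ min r (P.filter fun t => dist t u ≤ 2 * 2 ^ i).card + 1 := by omega
            _ ≤ (Q u).card + 1 := by have := hQcard u hu; omega
        · rw [hQo u hu hue]
          have hpf : ¬ dist p u ≤ 2 * 2 ^ i := fun h => hue (hkey u hu h)
          rw [Finset.filter_insert, if_neg hpf]
          exact hQcard u hu
    · constructor
      · intro u hu t ht
        rw [hN'] at hu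
        rw [hQo u hu] at ht
        obtain ⟨h1, h2'⟩ := hQsub u hu t ht
        exact ⟨Finset.mem_insert_of_mem h1, h2'⟩
      · intro u hu
        rw [hN'] at hu
        rw [hQo u hu]
        have hpf : ¬ dist p u ≤ 2 * 2 ^ i := not_le.mpr (hfar2 u hu)
        rw [Finset.filter_insert, if_neg hpf]
        exact hQcard u hu
end

section
/- In the incremental r-gather algorithm, querying every point at the minimal level i* such that all counters satisfy |Q_{i*}(q)| >= r yields a clustering where every cluster has size at least r and maximum radius at most 4*C^3*2^{i*} <= 8*C^3*rho*(P), i.e., an O(C^3)-approximate r-gather solution. -/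
open Classical in
/-- Incremental `r`-gather algorithm, query correctness: at the minimal level `i*`
at which all counters are full (`|Q_{i*}(q)| ≥ r` for all `q ∈ N_{i*}`), assigning
each point to the center whose counter contains it — or otherwise to a
`C`-approximate nearest center of `N_{i*}` — yields a clustering in which every
cluster has size at least `r` and every point is within distance `4·C³·2^{i*}` of
its center, and `4·C³·2^{i*} ≤ 8·C³·ρ*(P)` (expressed against the cost of an
arbitrary valid `r`-gather clustering `f`). -/
theorem stmt19 {X : Type*} [MetricSpace X] (P : Finset X) (hne : P.Nonempty)
    (r : ℕ) (hr : 2 ≤ r) (hcard : r ≤ P.card)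
    (hmindist : ∀ p ∈ P, ∀ q ∈ P, p ≠ q → 1 ≤ dist p q)
    (C : ℝ) (hC : 1 ≤ C)
    (N : ℕ → Finset X) (Q : ℕ → X → Finset X)
    (hNP : ∀ i, N i ⊆ P)
    -- net invariants at every level
    (hsep : ∀ i : ℕ, ∀ u ∈ N i, ∀ v ∈ N i, u ≠ v → 4 * C * 2 ^ i < dist u v)
    (hcov : ∀ i : ℕ, ∀ p ∈ P, ∃ u ∈ N i, dist p u ≤ 4 * C ^ 2 * 2 ^ i)
    -- counter invariants at every level
    (hQsub : ∀ i : ℕ, ∀ u ∈ N i, ∀ q ∈ Q i u, q ∈ P ∧ dist q u ≤ 2 * C * 2 ^ i)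
    (hQcard : ∀ i : ℕ, ∀ u ∈ N i,
      min r (P.filter fun q => dist q u ≤ 2 * 2 ^ i).card ≤ (Q i u).card)
    -- `i*` is the minimal level at which every counter is full
    (istar : ℕ)
    (hfull : ∀ u ∈ N istar, r ≤ (Q istar u).card)
    (hminimal : ∀ j < istar, ∃ u ∈ N j, (Q j u).card < r)
    -- the query assignment
    (c : X → X)
    (hc : ∀ p ∈ P, c p ∈ N istar ∧
      ((∃ q ∈ N istar, p ∈ Q istar q ∧ c p = q) ∨
       ((∀ q ∈ N istar, p ∉ Q istar q) ∧
        ∀ q ∈ N istar, dist p (c p) ≤ C * dist p q))) :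
    (∀ u ∈ N istar, r ≤ (P.filter fun p => c p = u).card) ∧
    (∀ p ∈ P, dist p (c p) ≤ 4 * C ^ 3 * 2 ^ istar) ∧
    (∀ f : X → X, (∀ p ∈ P, r ≤ (P.filter fun q => f q = f p).card) →
      4 * C ^ 3 * 2 ^ istar ≤ 8 * C ^ 3 * P.sup' hne fun q => dist q (f q)) := by
  have hCpos : (0:ℝ) < C := lt_of_lt_of_le one_pos hC
  have hpow : (0:ℝ) < 2 ^ istar := by positivity
  refine ⟨?_, ?_, ?_⟩
  · -- cluster sizes
    intro u hu
    have hsub : Q istar u ⊆ P.filter (fun p => c p = u) := by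
      intro q hq
      obtain ⟨hqP, hqd⟩ := hQsub istar u hu q hq
      refine Finset.mem_filter.2 ⟨hqP, ?_⟩
      obtain ⟨hcN, hcase⟩ := hc q hqP
      rcases hcase with ⟨v, hv, hqv, hcv⟩ | ⟨hno, _⟩
      · rcases eq_or_ne v u with rfl | hvu
        · exact hcv
        · exfalso
          obtain ⟨_, hqvd⟩ := hQsub istar v hv q hqv
          have hsep' := hsep istar u hu v hv (Ne.symm hvu)
          have : dist u v ≤ 4 * C * 2 ^ istar := by
            calc dist u v ≤ dist u q + dist q v := dist_triangle _ _ _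
              _ = dist q u + dist q v := by rw [dist_comm u q]
              _ ≤ 2 * C * 2 ^ istar + 2 * C * 2 ^ istar := add_le_add hqd hqvd
              _ = 4 * C * 2 ^ istar := by ring
          linarith
      · exact absurd hq (hno u hu)
    exact le_trans (hfull u hu) (Finset.card_le_card hsub)
  · -- radius bound
    intro p hp
    obtain ⟨hcN, hcase⟩ := hc p hp
    have hC2 : (1:ℝ) ≤ C ^ 2 := by nlinarith
    have hC3 : C ≤ C ^ 3 := by nlinarith
    rcases hcase with ⟨v, hv, hpv, hcv⟩ | ⟨hno, happrox⟩
    · have := (hQsub istar v hv p hpv).2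
      rw [hcv]
      calc dist p v ≤ 2 * C * 2 ^ istar := this
        _ ≤ 4 * C ^ 3 * 2 ^ istar := by nlinarith
    · obtain ⟨u, hu, hud⟩ := hcov istar p hp
      calc dist p (c p) ≤ C * dist p u := happrox u hu
        _ ≤ C * (4 * C ^ 2 * 2 ^ istar) := by
            exact mul_le_mul_of_nonneg_left hud (le_of_lt hCpos)
        _ = 4 * C ^ 3 * 2 ^ istar := by ring
  · -- optimality
    intro f hf
    set ρ := P.sup' hne fun q => dist q (f q) with hρ
    have hρ_le : ∀ q ∈ P, dist q (f q) ≤ ρ := fun q hq => Finset.le_sup' (fun q => dist q (f q)) hq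
    have key : (2:ℝ) ^ istar ≤ 2 * ρ := by
      rcases Nat.eq_zero_or_pos istar with h0 | hpos
      · -- use that some cluster has two distinct points
        obtain ⟨p, hp⟩ := hne
        have h2 : 1 < (P.filter fun q => f q = f p).card := lt_of_lt_of_le hr (hf p hp)
        obtain ⟨a, ha, b, hb, hab⟩ := Finset.one_lt_card.mp h2
        obtain ⟨haP, haf⟩ := Finset.mem_filter.mp ha
        obtain ⟨hbP, hbf⟩ := Finset.mem_filter.mp hb
        have h1 : (1:ℝ) ≤ dist a b := hmindist a haP b hbP hab
        have hfab : f a = f b := haf.trans hbf.symm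
        have : dist a b ≤ 2 * ρ := by
          calc dist a b ≤ dist a (f a) + dist (f a) b := dist_triangle _ _ _
            _ = dist a (f a) + dist b (f b) := by rw [hfab, dist_comm (f b) b]
            _ ≤ ρ + ρ := add_le_add (hρ_le a haP) (hρ_le b hbP)
            _ = 2 * ρ := by ring
        rw [h0]; norm_num; linarith
      · by_contra hcon
        push_neg at hcon
        obtain ⟨j, hj⟩ := Nat.exists_eq_add_of_lt hpos
        have hjlt : j < istar := by omega
        obtain ⟨u, hu, hQlt⟩ := hminimal j hjlt
        have huP : u ∈ P := hNP j hu
        have hball : (P.filter fun q => f q = f u) ⊆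
            (P.filter fun q => dist q u ≤ 2 * 2 ^ j) := by
          intro q hq
          obtain ⟨hqP, hqf⟩ := Finset.mem_filter.mp hq
          refine Finset.mem_filter.2 ⟨hqP, ?_⟩
          have hq1 : dist q (f u) ≤ ρ := hqf ▸ hρ_le q hqP
          have hu1 : dist (f u) u ≤ ρ := by rw [dist_comm]; exact hρ_le u huP
          have t1 : dist q u ≤ dist q (f u) + dist (f u) u := dist_triangle _ _ _
          have : dist q u ≤ 2 * ρ := by linarith
          have h2j : (2:ℝ) * 2 ^ j = 2 ^ istar := by
            rw [hj]; ring
          linarith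
        have hcard' : r ≤ (P.filter fun q => dist q u ≤ 2 * 2 ^ j).card :=
          le_trans (hf u huP) (Finset.card_le_card hball)
        have := hQcard j u hu
        rw [min_eq_left hcard'] at this
        omega
    have hC3 : (0:ℝ) < C ^ 3 := by positivity
    calc 4 * C ^ 3 * 2 ^ istar ≤ 4 * C ^ 3 * (2 * ρ) := by
          exact mul_le_mul_of_nonneg_left key (by positivity)
      _ = 8 * C ^ 3 * ρ := by ring
end
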